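/- Let f : ℂⁿ → ℂ be a holomorphic weighted homogeneous polynomial: there are positive integers p₁,…,pₙ and a positive integer d with f(r^{p₁}z₁,…,r^{pₙ}zₙ) = r^d f(z) for all r > 0 and all z. Assume the origin is the only critical point of f, i.e. for z ≠ 0 not all partial derivatives ∂f/∂z_j(z) vanish. Then for every z ≠ 0 with f(z) = 0 there exist indices j < k with conj(z_j)·(∂f/∂z_k)(z) ≠ conj(z_k)·(∂f/∂z_j)(z); equivalently Σ_{1≤j<k≤n} |conj(z_j)(∂f/∂z_k)(z) − conj(z_k)(∂f/∂z_j)(z)|² > 0, so the link f⁻¹(0) ∩ S_r is a positive contact submanifold of the sphere S_r for every r > 0. -/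

import Mathlib

open Complex ComplexConjugate

/-- For a holomorphic weighted homogeneous polynomial `f` with an isolated critical
point at the origin, at every `z ≠ 0` with `f(z) = 0` there are indices `j < k` with
`conj(z_j) f_{z_k}(z) ≠ conj(z_k) f_{z_j}(z)`, i.e.
`C(z) = Σ_{j<k} |conj(z_j) f_{z_k}(z) − conj(z_k) f_{z_j}(z)|² > 0`; hence the link
`f⁻¹(0) ∩ S_r` is a positive contact submanifold of `S_r` for every `r > 0`. -/
theorem weighted_homogeneous_link_contact (n : ℕ)
    (f : (Fin n → ℂ) → ℂ) (hf : Differentiable ℂ f)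
    (p : Fin n → ℕ) (hp : ∀ j, 0 < p j) (d : ℕ) (hd : 0 < d)
    (hhom : ∀ r : ℝ, 0 < r → ∀ z : Fin n → ℂ,
      f (fun j => ((r ^ (p j) : ℝ) : ℂ) * z j) = ((r ^ d : ℝ) : ℂ) * f z)
    (hcrit : ∀ z : Fin n → ℂ, z ≠ 0 → ∃ j, fderiv ℂ f z (Pi.single j 1) ≠ 0) :
    ∀ z : Fin n → ℂ, z ≠ 0 → f z = 0 →
      (∃ j k : Fin n, j < k ∧
        conj (z j) * fderiv ℂ f z (Pi.single k 1) ≠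
          conj (z k) * fderiv ℂ f z (Pi.single j 1)) ∧
      0 < ∑ j : Fin n, ∑ k : Fin n,
            if j < k then
              ‖conj (z j) * fderiv ℂ f z (Pi.single k 1)
                - conj (z k) * fderiv ℂ f z (Pi.single j 1)‖ ^ 2
            else 0 := by
  intro z hz hfz
  set L := fderiv ℂ f z with hLdef
  set a : Fin n → ℂ := fun j => L (Pi.single j 1) with hadef
  -- the curve r ↦ (r^{p_j} z_j) and its derivative at r = 1
  have hc : ∀ j, HasDerivAt (fun r : ℝ => ((r : ℂ)) ^ (p j) * z j)
      ((p j : ℂ) * z j) 1 := by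
    intro j
    have hg := (hasDerivAt_pow (p j) ((1 : ℝ) : ℂ)).hasFDerivAt
    have hg' : HasFDerivAt (fun w : ℂ => w ^ (p j))
        (ContinuousLinearMap.smulRight (1 : ℂ →L[ℂ] ℂ)
          (((p j) : ℂ) * ((1 : ℝ) : ℂ) ^ (p j - 1)))
        ((fun r : ℝ => (r : ℂ)) 1) := by
      exact hg
    have hof : HasFDerivAt (fun r : ℝ => (r : ℂ)) Complex.ofRealCLM (1 : ℝ) :=
      Complex.ofRealCLM.hasFDerivAt
    have hcomp := (hg'.restrictScalars ℝ).comp (1 : ℝ) hof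
    have h1 : HasDerivAt (fun r : ℝ => ((r : ℂ)) ^ (p j)) ((p j : ℂ)) 1 := by
      simpa [Function.comp_def] using hcomp.hasDerivAt
    simpa using h1.mul_const (z j)
  have hcurve : HasDerivAt (fun r : ℝ => (fun j => ((r : ℂ)) ^ (p j) * z j))
      (fun j => (p j : ℂ) * z j) 1 := hasDerivAt_pi.2 hc
  have hc1 : (fun j => ((1 : ℝ) : ℂ) ^ (p j) * z j) = z := by
    funext j; simp
  have hfd : HasFDerivAt f (L.restrictScalars ℝ)
      (fun j => ((1 : ℝ) : ℂ) ^ (p j) * z j) := by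
    rw [hc1]; exact ((hf z).hasFDerivAt).restrictScalars ℝ
  have hcomp : HasDerivAt (fun r : ℝ => f (fun j => ((r : ℂ)) ^ (p j) * z j))
      (L (fun j => (p j : ℂ) * z j)) 1 := by
    simpa [Function.comp_def] using hfd.comp_hasDerivAt 1 hcurve
  -- the function is identically 0 near r = 1
  have hzero : HasDerivAt (fun r : ℝ => f (fun j => ((r : ℂ)) ^ (p j) * z j))
      0 1 := by
    have hev : (fun r : ℝ => f (fun j => ((r : ℂ)) ^ (p j) * z j))
        =ᶠ[nhds (1 : ℝ)] fun _ => 0 := by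
      filter_upwards [Ioi_mem_nhds (zero_lt_one)] with r hr
      have h := hhom r hr z
      simp only [Complex.ofReal_pow] at h
      rw [h, hfz, mul_zero]
    exact (hasDerivAt_const (1 : ℝ) (0 : ℂ)).congr_of_eventuallyEq hev
  have heuler0 : L (fun j => (p j : ℂ) * z j) = 0 := hcomp.unique hzero
  -- Euler identity: ∑ p_j z_j f_{z_j}(z) = 0
  have hexp : L (fun j => (p j : ℂ) * z j) = ∑ j, (p j : ℂ) * z j * a j := by
    have hv : (fun j => (p j : ℂ) * z j)
        = ∑ j, ((p j : ℂ) * z j) • (Pi.single j 1 : Fin n → ℂ) := by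
      funext k
      simp [Finset.sum_apply, Pi.single_apply]
    rw [hv, map_sum]
    simp [hadef, smul_eq_mul]
  have heuler : ∑ j, (p j : ℂ) * z j * a j = 0 := by rw [← hexp]; exact heuler0
  -- key step
  have key : ∃ j k : Fin n, j < k ∧ conj (z j) * a k ≠ conj (z k) * a j := by
    by_contra hcon
    push_neg at hcon
    have hall : ∀ j k, conj (z j) * a k = conj (z k) * a j := by
      intro j k
      rcases lt_trichotomy j k with h | h | h
      · exact hcon j k h
      · rw [h]
      · exact (hcon k j h).symm
    obtain ⟨m, hm⟩ : ∃ m, z m ≠ 0 := by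
      by_contra h
      push_neg at h
      exact hz (funext h)
    obtain ⟨j0, hj0⟩ := hcrit z hz
    have hcm : conj (z m) ≠ 0 := by simpa using hm
    set lam : ℂ := a m / conj (z m) with hlam
    have haj : ∀ j, a j = lam * conj (z j) := by
      intro j
      rw [hlam, div_mul_eq_mul_div, eq_div_iff hcm]
      linear_combination hall m j
    have hsum : ∑ j, (p j : ℂ) * z j * a j
        = lam * ((∑ j, (p j : ℝ) * Complex.normSq (z j) : ℝ) : ℂ) := by
      have h1 : ∀ j : Fin n, (p j : ℂ) * z j * a j
          = lam * (((p j : ℝ) * Complex.normSq (z j) : ℝ) : ℂ) := by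
        intro j
        have h2 : (p j : ℂ) * z j * (lam * conj (z j))
            = lam * ((p j : ℂ) * (z j * conj (z j))) := by ring
        rw [haj j, h2, Complex.mul_conj]
        push_cast
        ring
      rw [Finset.sum_congr rfl fun j _ => h1 j, ← Finset.mul_sum]
      push_cast
      ring
    have hR : (0 : ℝ) < ∑ j, (p j : ℝ) * Complex.normSq (z j) := by
      refine Finset.sum_pos' (fun i _ => ?_) ⟨m, Finset.mem_univ m, ?_⟩
      · exact mul_nonneg (Nat.cast_nonneg _) (Complex.normSq_nonneg _)
      · exact mul_pos (by exact_mod_cast hp m) (Complex.normSq_pos.2 hm)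
    have hlam0 : lam = 0 := by
      have h := heuler
      rw [hsum] at h
      rcases mul_eq_zero.1 h with h' | h'
      · exact h'
      · exact absurd h' (by exact_mod_cast hR.ne')
    have : a j0 = 0 := by rw [haj j0, hlam0, zero_mul]
    exact hj0 this
  obtain ⟨j, k, hjk, hne⟩ := key
  refine ⟨⟨j, k, hjk, hne⟩, ?_⟩
  refine Finset.sum_pos' (fun i _ => ?_) ⟨j, Finset.mem_univ j, ?_⟩
  · refine Finset.sum_nonneg fun k' _ => ?_
    split <;> positivity
  · refine Finset.sum_pos' (fun i _ => ?_) ⟨k, Finset.mem_univ k, ?_⟩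
    · split <;> positivity
    · rw [if_pos hjk]
      exact pow_pos (norm_pos_iff.mpr (sub_ne_zero.2 hne)) 2
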